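/- arXiv:0810.2937 — 2 statements merged into one kernel-verified Lean document; each statement's English description precedes it below -/
import Mathlib

section
/- For every n ≥ 1 there exists a pure classical n↦1 strategy (E, D) that maximizes the average success probability among all pure classical n↦1 strategies and in which no decoding function D i is a constant function (i.e., each D i is either the identity or the negation on {0,1}). -/
/-- The average success probability (over the uniform input distribution) of a pure
classical `n ↦ 1` strategy with encoding `E` and decoding functions `D`. -/
noncomputable def avgSuccess (n : ℕ) (E : (Fin n → Bool) → Bool)
    (D : Fin n → Bool → Bool) : ℝ :=
  (1 / ((n : ℝ) * 2 ^ n)) *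
    ∑ x : Fin n → Bool, ∑ i : Fin n, (if D i (E x) = x i then (1 : ℝ) else 0)

noncomputable def fcnt (n : ℕ) (E : (Fin n → Bool) → Bool) (i : Fin n) : ℝ :=
  ∑ x : Fin n → Bool, (if E x = x i then (1:ℝ) else 0)

noncomputable def gcnt (n : ℕ) (E : (Fin n → Bool) → Bool) (i : Fin n) : ℝ :=
  ∑ x : Fin n → Bool, (if (!E x) = x i then (1:ℝ) else 0)

noncomputable def hcnt (n : ℕ) (i : Fin n) (c : Bool) : ℝ :=
  ∑ x : Fin n → Bool, (if c = x i then (1:ℝ) else 0)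

noncomputable def Dbest (n : ℕ) (E : (Fin n → Bool) → Bool) (i : Fin n) : Bool → Bool :=
  if gcnt n E i ≤ fcnt n E i then (fun b => b) else (fun b => !b)

lemma card_fun (n : ℕ) : (Fintype.card (Fin n → Bool) : ℝ) = 2 ^ n := by
  simp [Fintype.card_fun]

lemma fg_sum (n : ℕ) (E : (Fin n → Bool) → Bool) (i : Fin n) :
    fcnt n E i + gcnt n E i = 2 ^ n := by
  rw [fcnt, gcnt, ← Finset.sum_add_distrib]
  have : ∀ x : Fin n → Bool,
      ((if E x = x i then (1:ℝ) else 0) + (if (!E x) = x i then (1:ℝ) else 0)) = 1 := by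
    intro x; cases hE : E x <;> cases hx : x i <;> simp [hE, hx]
  rw [Finset.sum_congr rfl (fun x _ => this x)]
  simp [card_fun]

lemma hh_sum (n : ℕ) (i : Fin n) (c : Bool) :
    hcnt n i c + hcnt n i (!c) = 2 ^ n := by
  rw [hcnt, hcnt, ← Finset.sum_add_distrib]
  have : ∀ x : Fin n → Bool,
      ((if c = x i then (1:ℝ) else 0) + (if (!c) = x i then (1:ℝ) else 0)) = 1 := by
    intro x; cases c <;> cases hx : x i <;> simp [hx]
  rw [Finset.sum_congr rfl (fun x _ => this x)]
  simp [card_fun]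

lemma hh_eq (n : ℕ) (i : Fin n) (c : Bool) : hcnt n i c = hcnt n i (!c) := by
  have hinv : Function.Involutive (fun x : Fin n → Bool => Function.update x i (!(x i))) := by
    intro x
    funext j
    by_cases hj : j = i
    · subst hj; simp
    · simp [Function.update_of_ne hj]
  rw [hcnt, hcnt]
  refine Fintype.sum_equiv hinv.toPerm _ _ ?_
  intro x
  have : (Function.update x i (!(x i))) i = !(x i) := by simp
  simp only [Function.Involutive.coe_toPerm, this]
  cases c <;> cases hx : x i <;> simp [hx]

lemma le_best (n : ℕ) (E : (Fin n → Bool) → Bool) (i : Fin n) (d : Bool → Bool) :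
    (∑ x : Fin n → Bool, if d (E x) = x i then (1:ℝ) else 0) ≤
    (∑ x : Fin n → Bool, if (Dbest n E i) (E x) = x i then (1:ℝ) else 0) := by
  have hRHS : (∑ x : Fin n → Bool, if (Dbest n E i) (E x) = x i then (1:ℝ) else 0)
      = max (fcnt n E i) (gcnt n E i) := by
    rw [Dbest]
    split_ifs with h
    · rw [max_eq_left h]; rfl
    · rw [max_eq_right (le_of_lt (not_le.mp h))]; rfl
  rw [hRHS]
  have hfg := fg_sum n E i
  have hmax1 : fcnt n E i ≤ max (fcnt n E i) (gcnt n E i) := le_max_left _ _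
  have hmax2 : gcnt n E i ≤ max (fcnt n E i) (gcnt n E i) := le_max_right _ _
  have hconstcase : ∀ c : Bool, hcnt n i c ≤ max (fcnt n E i) (gcnt n E i) := by
    intro c
    have h1 := hh_sum n i c
    have h2 := hh_eq n i c
    linarith
  cases h1 : d true <;> cases h2 : d false
  · -- d = const false
    have : ∀ x : Fin n → Bool, d (E x) = false := by
      intro x; cases hE : E x <;> simp [h1, h2]
    calc (∑ x : Fin n → Bool, if d (E x) = x i then (1:ℝ) else 0)
        = hcnt n i false := by
          rw [hcnt]; exact Finset.sum_congr rfl (fun x _ => by rw [this x])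
      _ ≤ _ := hconstcase false
  · -- d = not
    have : ∀ x : Fin n → Bool, d (E x) = !(E x) := by
      intro x; cases hE : E x <;> simp [h1, h2]
    calc (∑ x : Fin n → Bool, if d (E x) = x i then (1:ℝ) else 0)
        = gcnt n E i := by
          rw [gcnt]; exact Finset.sum_congr rfl (fun x _ => by rw [this x])
      _ ≤ _ := hmax2
  · -- d = id
    have : ∀ x : Fin n → Bool, d (E x) = E x := by
      intro x; cases hE : E x <;> simp [h1, h2]
    calc (∑ x : Fin n → Bool, if d (E x) = x i then (1:ℝ) else 0)
        = fcnt n E i := by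
          rw [fcnt]; exact Finset.sum_congr rfl (fun x _ => by rw [this x])
      _ ≤ _ := hmax1
  · -- d = const true
    have : ∀ x : Fin n → Bool, d (E x) = true := by
      intro x; cases hE : E x <;> simp [h1, h2]
    calc (∑ x : Fin n → Bool, if d (E x) = x i then (1:ℝ) else 0)
        = hcnt n i true := by
          rw [hcnt]; exact Finset.sum_congr rfl (fun x _ => by rw [this x])
      _ ≤ _ := hconstcase true

lemma avg_le_best (n : ℕ) (E : (Fin n → Bool) → Bool) (D : Fin n → Bool → Bool) :
    avgSuccess n E D ≤ avgSuccess n E (Dbest n E) := by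
  rw [avgSuccess, avgSuccess, Finset.sum_comm, Finset.sum_comm (s := Finset.univ)
    (t := Finset.univ) (f := fun x i => if (Dbest n E i) (E x) = x i then (1:ℝ) else 0)]
  have hc : (0:ℝ) ≤ 1 / ((n : ℝ) * 2 ^ n) := by positivity
  apply mul_le_mul_of_nonneg_left _ hc
  exact Finset.sum_le_sum (fun i _ => le_best n E i (D i))

/-- There is an optimal pure classical `n ↦ 1` strategy in which no decoding function
is constant: each decoding function is either the identity or the negation on `{0,1}`. -/
theorem stmt2 (n : ℕ) (hn : 1 ≤ n) :
    ∃ (E : (Fin n → Bool) → Bool) (D : Fin n → Bool → Bool),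
      (∀ (E' : (Fin n → Bool) → Bool) (D' : Fin n → Bool → Bool),
        avgSuccess n E' D' ≤ avgSuccess n E D) ∧
      (∀ i : Fin n, D i = (fun b => b) ∨ D i = (fun b => !b)) := by
  obtain ⟨E, -, hE⟩ := Finset.exists_max_image (Finset.univ : Finset ((Fin n → Bool) → Bool))
    (fun E => avgSuccess n E (Dbest n E)) ⟨fun _ => true, Finset.mem_univ _⟩
  refine ⟨E, Dbest n E, ?_, ?_⟩
  · intro E' D'
    calc avgSuccess n E' D' ≤ avgSuccess n E' (Dbest n E') := avg_le_best n E' D'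
      _ ≤ avgSuccess n E (Dbest n E) := hE E' (Finset.mem_univ _)
  · intro i
    rw [Dbest]
    split_ifs <;> [left; right] <;> rfl
end

section
/- For every n ≥ 1 there exists a pure classical n↦1 strategy (E, D) that maximizes the average success probability among all pure classical n↦1 strategies and in which no decoding function D i is the negation function b ↦ 1 − b. -/
/-- There is an optimal pure classical `n ↦ 1` strategy in which no decoding function
is the negation function `b ↦ 1 - b`. -/
theorem stmt3 (n : ℕ) (hn : 1 ≤ n) :
    ∃ (E : (Fin n → Bool) → Bool) (D : Fin n → Bool → Bool),
      (∀ (E' : (Fin n → Bool) → Bool) (D' : Fin n → Bool → Bool),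
        avgSuccess n E' D' ≤ avgSuccess n E D) ∧
      (∀ i : Fin n, D i ≠ (fun b => !b)) := by
  classical
  obtain ⟨⟨E, D⟩, hmax⟩ := Finite.exists_max
    (fun p : ((Fin n → Bool) → Bool) × (Fin n → Bool → Bool) => avgSuccess n p.1 p.2)
  set s : Fin n → Bool := fun i => if D i = (fun b => !b) then true else false with hs
  set flip : (Fin n → Bool) → (Fin n → Bool) := fun x i => xor (x i) (s i) with hflip
  have hinv : Function.Involutive flip := by
    intro x; funext i; simp [hflip, Bool.xor_assoc]
  let e : (Fin n → Bool) ≃ (Fin n → Bool) := hinv.toPerm flip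
  refine ⟨fun x => E (flip x), fun i b => xor (D i b) (s i), ?_, ?_⟩
  · intro E' D'
    have heq : avgSuccess n (fun x => E (flip x)) (fun i b => xor (D i b) (s i))
        = avgSuccess n E D := by
      unfold avgSuccess
      congr 1
      rw [← Equiv.sum_comp e (fun x => ∑ i : Fin n, (if D i (E x) = x i then (1:ℝ) else 0))]
      apply Fintype.sum_congr
      intro x
      apply Fintype.sum_congr
      intro i
      show (if xor (D i (E (flip x))) (s i) = x i then (1:ℝ) else 0)
          = if D i (E (flip x)) = xor (x i) (s i) then (1:ℝ) else 0
      cases hsi : s i <;> simp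
    rw [heq]
    exact hmax (E', D')
  · intro i h
    by_cases hD : D i = fun b => !b
    · have hsi : s i = true := by simp [hs, hD]
      have := congrFun h true
      simp [hsi, hD] at this
    · have hsi : s i = false := by simp [hs, hD]
      apply hD
      funext b
      have := congrFun h b
      simpa [hsi] using this
end
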